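/- For every integer k ≥ 1 there exist polynomials e_{k,0}, …, e_{k,k−1} ∈ ℤ[t], each of degree at most k − 1, with e_{k,k−1}(t) = (2k−3)!! · t^{k−1} (where (2k−3)!! = (2k−2)!/(2^{k−1}·(k−1)!), and (−1)!! = 1), such that for every integer ν ≥ 2 the following identity holds in ℚ⟦x⟧: ( (−1)^{k−1}·(k−1)! + x^{k}·D^{k−1}( D(q)·q⁻¹ ) ) · (ν − (ν−1)·q)^{2k−1} = Σ_{ℓ=0}^{k−1} (−1)^{k−ℓ+1} · e_{k,ℓ}(ν) · (ν − (ν−1)·q)^{k−1−ℓ}. (The left-hand side is x^k·∂_x^{k}(log w)·(ν−(ν−1)q)^{2k−1}, since ∂_x(log w) = 1/x + q′/q; for k = 1 the identity reads x·w′/w = (ν − (ν−1)q)⁻¹.) -/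

import Mathlib

section PolyPart

open Polynomial

/-- `PP n` is the polynomial `Q_{n+1}` in variables `ν` (inner) and `U` (outer). -/
noncomputable def PP : ℕ → Polynomial (Polynomial ℤ)
  | 0 => 1
  | n + 1 =>
    -X ^ 2 * (X * derivative (PP n) - Polynomial.C (Polynomial.C (n : ℤ)) * PP n) +
      (Polynomial.C (Polynomial.X + 1) * X - Polynomial.C Polynomial.X) *
        (X * derivative (PP n) - Polynomial.C (Polynomial.C (2 * n + 1 : ℤ)) * PP n)

lemma coeff_X_mul_deriv {R : Type*} [CommRing R] (p : R[X]) (N : ℕ) :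
    (X * derivative p).coeff N = p.coeff N * N := by
  cases N with
  | zero => simp
  | succ n => rw [coeff_X_mul, coeff_derivative]; push_cast; ring

lemma Ecoeff {R : Type*} [CommRing R] (p : R[X]) (c : R) (N : ℕ) :
    (X * derivative p - Polynomial.C c * p).coeff N = p.coeff N * (N : R) - c * p.coeff N := by
  rw [coeff_sub, coeff_X_mul_deriv, coeff_C_mul]

lemma coeff_PP_succ (n N : ℕ) (hN : 2 ≤ N) :
    (PP (n+1)).coeff N =
      -((PP n).coeff (N-2) * ((N:ℤ[X]) - 2) - Polynomial.C (n : ℤ) * (PP n).coeff (N-2))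
      + (Polynomial.X + 1) * ((PP n).coeff (N-1) * ((N:ℤ[X]) - 1)
            - Polynomial.C (2 * n + 1 : ℤ) * (PP n).coeff (N-1))
      - Polynomial.X * ((PP n).coeff N * (N:ℤ[X])
            - Polynomial.C (2 * n + 1 : ℤ) * (PP n).coeff N) := by
  have hXmul : ∀ (p : Polynomial (ℤ[X])) (M : ℕ), 1 ≤ M → (X * p).coeff M = p.coeff (M-1) := by
    intro p M hM
    conv_lhs => rw [show M = (M-1)+1 by omega]
    rw [coeff_X_mul]
  have hX2mul : ∀ (p : Polynomial (ℤ[X])) (M : ℕ), 2 ≤ M → (X^2 * p).coeff M = p.coeff (M-2) := by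
    intro p M hM
    conv_lhs => rw [show M = (M-2)+2 by omega]
    rw [coeff_X_pow_mul]
  rw [PP]
  have e1 : (-X ^ 2 * (X * derivative (PP n) - Polynomial.C (Polynomial.C (n : ℤ)) * PP n)).coeff N
      = -((X * derivative (PP n) - Polynomial.C (Polynomial.C (n : ℤ)) * PP n).coeff (N-2)) := by
    rw [show (-X ^ 2 * (X * derivative (PP n) - Polynomial.C (Polynomial.C (n : ℤ)) * PP n))
        = -(X ^ 2 * (X * derivative (PP n) - Polynomial.C (Polynomial.C (n : ℤ)) * PP n)) by ring,
      coeff_neg, hX2mul _ _ hN]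
  have e2 : ((Polynomial.C (Polynomial.X + 1) * X - Polynomial.C Polynomial.X) *
        (X * derivative (PP n) - Polynomial.C (Polynomial.C (2 * n + 1 : ℤ)) * PP n)).coeff N
      = (Polynomial.X + 1) * ((X * derivative (PP n) - Polynomial.C (Polynomial.C (2 * n + 1 : ℤ)) * PP n).coeff (N-1))
        - Polynomial.X * ((X * derivative (PP n) - Polynomial.C (Polynomial.C (2 * n + 1 : ℤ)) * PP n).coeff N) := by
    rw [sub_mul, coeff_sub, mul_assoc, coeff_C_mul, coeff_C_mul, hXmul _ _ (by omega)]
  rw [coeff_add, e1, e2, Ecoeff, Ecoeff, Ecoeff]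
  have c2 : ((N - 2 : ℕ) : ℤ[X]) = (N : ℤ[X]) - 2 := by
    push_cast [Nat.cast_sub (by omega : 2 ≤ N)]; ring
  have c1 : ((N - 1 : ℕ) : ℤ[X]) = (N : ℤ[X]) - 1 := by
    push_cast [Nat.cast_sub (by omega : 1 ≤ N)]; ring
  rw [c1, c2]
  ring

lemma PP_natDegree (n : ℕ) : (PP n).natDegree ≤ n := by
  induction n with
  | zero => simp [PP]
  | succ n ih =>
    rw [natDegree_le_iff_coeff_eq_zero]
    intro N hN
    have z : ∀ M, n < M → (PP n).coeff M = 0 := fun M hM =>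
      coeff_eq_zero_of_natDegree_lt (lt_of_le_of_lt ih hM)
    rw [coeff_PP_succ n N (by omega)]
    rcases eq_or_lt_of_le (show n ≤ N - 2 by omega) with h | h
    · rw [z (N-1) (by omega), z N (by omega), ← h]
      have : ((N:ℤ[X]) - 2) = Polynomial.C (n : ℤ) := by
        have : ((N : ℕ) : ℤ[X]) = ((n + 2 : ℕ) : ℤ[X]) := by rw [show N = n + 2 by omega]
        rw [this]
        push_cast
        simp [Polynomial.C_eq_natCast]
      rw [this]; ring
    · rw [z (N-2) h, z (N-1) (by omega), z N (by omega)]; ring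

lemma PP_coeff_zero (n : ℕ) :
    (PP n).coeff 0 = Polynomial.C ((Nat.doubleFactorial (2*n - 1) : ℤ)) * Polynomial.X ^ n := by
  induction n with
  | zero => simp [PP, Nat.doubleFactorial]
  | succ n ih =>
    have h0 : (PP (n+1)).coeff 0
        = - Polynomial.X * ((PP n).coeff 0 * ((0:ℕ):ℤ[X]) - Polynomial.C (2 * n + 1 : ℤ) * (PP n).coeff 0) := by
      rw [PP, coeff_add]
      have e1 : (-X ^ 2 * (X * derivative (PP n) - Polynomial.C (Polynomial.C (n : ℤ)) * PP n)).coeff 0 = 0 := by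
        rw [show (-X ^ 2 * (X * derivative (PP n) - Polynomial.C (Polynomial.C (n : ℤ)) * PP n))
            = X * (-X * (X * derivative (PP n) - Polynomial.C (Polynomial.C (n : ℤ)) * PP n)) by ring]
        rw [mul_coeff_zero]
        simp
      have e2 : ((Polynomial.C (Polynomial.X + 1) * X - Polynomial.C Polynomial.X) *
            (X * derivative (PP n) - Polynomial.C (Polynomial.C (2 * n + 1 : ℤ)) * PP n)).coeff 0
          = - Polynomial.X * ((X * derivative (PP n) - Polynomial.C (Polynomial.C (2 * n + 1 : ℤ)) * PP n).coeff 0) := by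
        rw [sub_mul, coeff_sub, coeff_C_mul]
        rw [show (Polynomial.C (Polynomial.X + 1) * X *
              (X * derivative (PP n) - Polynomial.C (Polynomial.C (2 * n + 1 : ℤ)) * PP n))
            = X * (Polynomial.C (Polynomial.X + 1) *
              (X * derivative (PP n) - Polynomial.C (Polynomial.C (2 * n + 1 : ℤ)) * PP n)) by ring]
        rw [mul_coeff_zero]
        simp
      rw [e1, e2, Ecoeff]
      push_cast
      ring
    rw [h0, ih]
    have hdf : ((Nat.doubleFactorial (2*(n+1) - 1) : ℤ)) = (2*n+1) * (Nat.doubleFactorial (2*n - 1) : ℤ) := by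
      cases n with
      | zero => simp [Nat.doubleFactorial]
      | succ m =>
        have : 2*(m+1+1) - 1 = (2*(m+1) - 1) + 2 := by omega
        rw [this, Nat.doubleFactorial_add_two]
        push_cast [show (2*(m+1) - 1) + 2 = 2*(m+1)+1 by omega]
        ring
    rw [hdf, map_mul]
    push_cast
    ring

section Good

/-- `Good n p` : all coefficients of `p` have degree at most `n`. -/
def Good (n : ℕ) (p : Polynomial (ℤ[X])) : Prop := ∀ m, (p.coeff m).natDegree ≤ n

lemma Good.mono {n n' : ℕ} {p} (h : Good n p) (hn : n ≤ n') : Good n' p :=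
  fun m => le_trans (h m) hn

lemma Good.add {n p q} (hp : Good n p) (hq : Good n q) : Good n (p + q) := fun m => by
  rw [coeff_add]; exact le_trans (natDegree_add_le _ _) (max_le (hp m) (hq m))

lemma Good.sub {n p q} (hp : Good n p) (hq : Good n q) : Good n (p - q) := fun m => by
  rw [coeff_sub]; exact le_trans (natDegree_sub_le _ _) (max_le (hp m) (hq m))

lemma Good.neg {n p} (hp : Good n p) : Good n (-p) := fun m => by
  rw [coeff_neg, natDegree_neg]; exact hp m

lemma Good.Xmul {n p} (hp : Good n p) : Good n (X * p) := fun m => by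
  cases m with
  | zero => simp [mul_coeff_zero]
  | succ m => rw [coeff_X_mul]; exact hp m

lemma Good.Cmul {n p} (a : ℤ[X]) (d : ℕ) (ha : a.natDegree ≤ d) (hp : Good n p) :
    Good (d + n) (Polynomial.C a * p) := fun m => by
  rw [coeff_C_mul]
  exact le_trans (natDegree_mul_le) (add_le_add ha (hp m))

lemma Good.deriv {n p} (hp : Good n p) : Good n (derivative p) := fun m => by
  rw [coeff_derivative]
  refine le_trans (natDegree_mul_le) ?_
  have : ((m:ℤ[X]) + 1).natDegree = 0 := by
    rw [show ((m:ℤ[X]) + 1) = ((m+1 : ℕ) : ℤ[X]) by push_cast; ring, natDegree_natCast]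
  have := hp (m+1)
  omega

lemma Good.one (n : ℕ) : Good n (1 : Polynomial (ℤ[X])) := fun m => by
  rcases Nat.eq_zero_or_pos m with h | h
  · subst h; simp
  · rw [coeff_one, if_neg (by omega)]; simp

end Good

/-- all coefficients of `PP n` have `ν`-degree at most `n`. -/
lemma PP_coeff_natDegree (n : ℕ) : Good n (PP n) := by
  induction n with
  | zero => exact Good.one 0
  | succ n ih =>
    rw [PP]
    have hE1 : Good n (X * derivative (PP n) - Polynomial.C (Polynomial.C (n : ℤ)) * PP n) := by
      refine Good.sub (Good.Xmul (Good.deriv ih)) ?_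
      simpa using Good.Cmul (Polynomial.C (n:ℤ)) 0 (le_of_eq (natDegree_C _)) ih
    have hE2 : Good n (X * derivative (PP n) - Polynomial.C (Polynomial.C (2*n+1 : ℤ)) * PP n) := by
      refine Good.sub (Good.Xmul (Good.deriv ih)) ?_
      simpa using Good.Cmul (Polynomial.C (2*n+1:ℤ)) 0 (le_of_eq (natDegree_C _)) ih
    refine Good.add ?_ ?_
    · have : (-X^2 * (X * derivative (PP n) - Polynomial.C (Polynomial.C (n : ℤ)) * PP n))
          = -(X * (X * (X * derivative (PP n) - Polynomial.C (Polynomial.C (n : ℤ)) * PP n))) := by ring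
      rw [this]
      exact (Good.Xmul (Good.Xmul hE1)).neg.mono (by omega)
    · rw [sub_mul]
      refine Good.sub ?_ ?_
      · rw [mul_assoc]
        exact (Good.Cmul (Polynomial.X + 1) 1 (le_trans (natDegree_add_le _ _) (by simp)) hE2.Xmul).mono (by omega)
      · exact (Good.Cmul Polynomial.X 1 (by simp) hE2).mono (by omega)

end PolyPart

open PowerSeries

/-- The formal derivative `d/dx` on `ℚ⟦x⟧`. -/
noncomputable def D : PowerSeries ℚ → PowerSeries ℚ := PowerSeries.derivativeFun

section Dlemmas

lemma D_mul (f g : ℚ⟦X⟧) : D (f * g) = f * D g + g * D f := by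
  simpa [D, smul_eq_mul] using PowerSeries.derivativeFun_mul f g

lemma D_add (f g : ℚ⟦X⟧) : D (f + g) = D f + D g := PowerSeries.derivativeFun_add f g

lemma D_C (r : ℚ) : D (C r) = 0 := PowerSeries.derivative_C

lemma D_one : D (1 : ℚ⟦X⟧) = 0 := PowerSeries.derivativeFun_one

lemma D_sub (f g : ℚ⟦X⟧) : D (f - g) = D f - D g := by
  ext n
  exact congrArg (coeff n) (map_sub (derivative ℚ) f g)

lemma D_X : D (X : ℚ⟦X⟧) = 1 := by
  ext n
  change coeff n (derivative ℚ X) = _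
  simp only [PowerSeries.coeff_derivative, PowerSeries.coeff_X, PowerSeries.coeff_one]
  rcases Nat.eq_zero_or_pos n with h | h
  · subst h; simp
  · rw [if_neg (by omega), if_neg (by omega), zero_mul]

lemma D_Cmul (r : ℚ) (f : ℚ⟦X⟧) : D (C r * f) = C r * D f := by
  rw [D_mul, D_C, mul_zero, add_zero]

lemma D_Cmul' (g : ℚ⟦X⟧) (hg : D g = 0) (f : ℚ⟦X⟧) : D (g * f) = g * D f := by
  rw [D_mul, hg, mul_zero, add_zero]

lemma D_pow_succ (f : ℚ⟦X⟧) (n : ℕ) :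
    D (f ^ (n + 1)) = ((n + 1 : ℕ) : ℚ⟦X⟧) * f ^ n * D f := by
  induction n with
  | zero => simp [pow_one]
  | succ n ih =>
    rw [pow_succ, D_mul, ih]
    push_cast
    ring

lemma D_Xpow (n : ℕ) : D ((X : ℚ⟦X⟧) ^ (n + 1)) = ((n + 1 : ℕ) : ℚ⟦X⟧) * X ^ n := by
  rw [D_pow_succ, D_X, mul_one]

/-- chain rule for evaluating a polynomial at a power series. -/
lemma D_eval₂ (ψ : Polynomial ℤ →+* ℚ⟦X⟧) (hψ : ∀ a, D (ψ a) = 0) (u : ℚ⟦X⟧)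
    (p : Polynomial (Polynomial ℤ)) :
    D (Polynomial.eval₂ ψ u p) =
      Polynomial.eval₂ ψ u (Polynomial.derivative p) * D u := by
  induction p using Polynomial.induction_on with
  | C a => simp [hψ]
  | add p q hp hq =>
    rw [Polynomial.eval₂_add, D_add, hp, hq, map_add, Polynomial.eval₂_add, add_mul]
  | monomial n a _ =>
    rw [Polynomial.eval₂_mul, Polynomial.eval₂_C, Polynomial.eval₂_pow, Polynomial.eval₂_X,
      D_Cmul' (ψ a) (hψ a), D_pow_succ, Polynomial.derivative_C_mul_X_pow,
      Polynomial.eval₂_mul, Polynomial.eval₂_C, Polynomial.eval₂_pow, Polynomial.eval₂_X,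
      map_mul, map_natCast]
    push_cast
    ring

end Dlemmas

/-- the evaluation homomorphism `ℤ[ν] → ℚ⟦X⟧`, `ν ↦ C r`. -/
noncomputable def psi (r : ℚ) : Polynomial ℤ →+* ℚ⟦X⟧ :=
  (PowerSeries.C (R := ℚ)).comp (Polynomial.eval₂RingHom (Int.castRingHom ℚ) r)

lemma psi_C (r : ℚ) (a : ℤ) : psi r (Polynomial.C a) = C (a:ℚ) := by simp [psi]

lemma psi_X (r : ℚ) : psi r Polynomial.X = C r := by simp [psi]

lemma D_psi (r : ℚ) (a : Polynomial ℤ) : D (psi r a) = 0 := D_C _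

lemma psi_apply (r : ℚ) (p : Polynomial ℤ) :
    psi r p = C (Polynomial.eval₂ (Int.castRingHom ℚ) r p) := rfl

theorem stmt15 (k : ℕ) (hk : 1 ≤ k) :
    ∃ e : ℕ → Polynomial ℤ,
      (∀ ℓ, ℓ ≤ k - 1 → (e ℓ).natDegree ≤ k - 1) ∧
      e (k - 1) = Polynomial.C ((Nat.doubleFactorial (2 * k - 3) : ℤ)) * Polynomial.X ^ (k - 1) ∧
      ∀ ν : ℕ, 2 ≤ ν → ∀ w q : PowerSeries ℚ,
        constantCoeff w = 0 →
        (X : ℚ⟦X⟧) = w - C (((2 * ν).factorial : ℚ) / (ν.factorial * (ν - 1).factorial)) * w ^ ν →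
        constantCoeff q = 1 → X * q = w →
        (C ((-1 : ℚ) ^ (k - 1) * (k - 1).factorial) + X ^ k * D^[k - 1] (D q * q⁻¹)) *
            (C (ν : ℚ) - (C (ν : ℚ) - 1) * q) ^ (2 * k - 1) =
          ∑ ℓ ∈ Finset.range k,
            C ((-1 : ℚ) ^ (k - ℓ + 1) * (((e ℓ).eval (ν : ℤ) : ℤ) : ℚ)) *
              (C (ν : ℚ) - (C (ν : ℚ) - 1) * q) ^ (k - 1 - ℓ) := by
  obtain ⟨n, rfl⟩ : ∃ n, k = n + 1 := ⟨k - 1, by omega⟩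
  refine ⟨fun ℓ => Polynomial.C ((-1 : ℤ) ^ (n + 1 - ℓ + 1)) * (PP n).coeff (n - ℓ), ?_, ?_, ?_⟩
  · intro ℓ _
    simp only [Nat.add_sub_cancel]
    refine le_trans Polynomial.natDegree_mul_le ?_
    simp only [Polynomial.natDegree_C, zero_add]
    exact PP_coeff_natDegree n _
  · simp only [Nat.add_sub_cancel, Nat.sub_self]
    rw [show n + 1 - n + 1 = 2 by omega, PP_coeff_zero, show 2 * (n + 1) - 3 = 2 * n - 1 by omega]
    norm_num
  · intro ν hν w q hw0 hx hq0 hqw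
    obtain ⟨m, rfl⟩ : ∃ m, ν = m + 2 := ⟨ν - 2, by omega⟩
    set c : ℚ := ((2 * (m + 2)).factorial : ℚ) / ((m + 2).factorial * (m + 2 - 1).factorial) with hc
    set s : ℚ⟦X⟧ := C ((m + 2 : ℕ) : ℚ) with hs0
    set u : ℚ⟦X⟧ := s - (s - 1) * q with hu
    set ψ : Polynomial ℤ →+* ℚ⟦X⟧ := psi ((m + 2 : ℕ) : ℚ) with hψdef
    have hXne : (X : ℚ⟦X⟧) ≠ 0 := X_ne_zero
    have hqne : q ≠ 0 := fun h => by simp [h] at hq0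
    have hs : s = ((m : ℕ) : ℚ⟦X⟧) + 2 := by
      rw [hs0, show ((m + 2 : ℕ) : ℚ) = ((m : ℕ) : ℚ) + 2 by push_cast; ring, map_add,
        map_natCast, map_ofNat]
    -- the algebraic equation for q
    have hq1 : q = 1 + C c * ((X : ℚ⟦X⟧) ^ (m + 1) * q ^ (m + 2)) := by
      have h := hx
      rw [← hqw] at h
      apply mul_left_cancel₀ hXne
      rw [mul_pow] at h
      linear_combination -h
    -- the differentiated equation
    have hd : D q = C c * ((X : ℚ⟦X⟧) ^ (m + 1) * ((((m : ℕ) : ℚ⟦X⟧) + 2) * q ^ (m + 1) * D q)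
        + q ^ (m + 2) * ((((m : ℕ) : ℚ⟦X⟧) + 1) * (X : ℚ⟦X⟧) ^ m)) := by
      conv_lhs => rw [hq1]
      rw [D_add, D_one, zero_add, D_Cmul, D_mul, D_Xpow, D_pow_succ]
      push_cast
      ring
    have hF1 : (X : ℚ⟦X⟧) * D q * u = (s - 1) * q * (q - 1) := by
      linear_combination ((X : ℚ⟦X⟧) * q) * hd
        - ((((m : ℕ) : ℚ⟦X⟧) + 2) * X * D q + (((m : ℕ) : ℚ⟦X⟧) + 1) * q) * hq1
        + ((X : ℚ⟦X⟧) * D q) * hu + ((X : ℚ⟦X⟧) * D q * (1 - q) - q * (q - 1)) * hs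
    have hqinv : q * q⁻¹ = 1 := PowerSeries.mul_inv_cancel q (by rw [hq0]; exact one_ne_zero)
    have hF2 : (X : ℚ⟦X⟧) * (D q * q⁻¹) * u = (s - 1) * (q - 1) := by
      apply mul_right_cancel₀ hqne
      linear_combination ((X : ℚ⟦X⟧) * D q * u) * hqinv + hF1
    have hDs : D s = 0 := by rw [hs0]; exact D_C _
    have hDu : D u = -((s - 1) * D q) := by
      rw [hu, D_sub, D_mul, D_sub, D_one, hDs]
      ring
    have hW : (X : ℚ⟦X⟧) * D u * u = (s + 1) * u - u ^ 2 - s := by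
      rw [hDu]
      linear_combination (-(s - 1)) * hF1 + (u + (s - (s - 1) * q) - (s + 1)) * hu
    have hψ0 : ∀ a, D (ψ a) = 0 := fun a => D_psi _ a
    have hψC1 : ∀ a : ℕ, ψ (Polynomial.C ((a : ℕ) : ℤ)) = ((a : ℕ) : ℚ⟦X⟧) := by
      intro a
      rw [hψdef, psi_C, show (((a : ℕ) : ℤ) : ℚ) = ((a : ℕ) : ℚ) by push_cast; ring, map_natCast]
    have hψC2 : ∀ a : ℕ, ψ (Polynomial.C (2 * ((a : ℕ) : ℤ) + 1)) = 2 * ((a : ℕ) : ℚ⟦X⟧) + 1 := by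
      intro a
      rw [hψdef, psi_C, show ((2 * ((a : ℕ) : ℤ) + 1 : ℤ) : ℚ) = ((2 * a + 1 : ℕ) : ℚ) by
        push_cast; ring, map_natCast]
      push_cast
      ring
    have hψX : ψ Polynomial.X = s := by rw [hψdef, psi_X, ← hs0]
    have hψX1 : ψ (Polynomial.X + 1) = s + 1 := by rw [map_add, map_one, hψX]
    -- main induction
    have main : ∀ N : ℕ,
        (C ((-1 : ℚ) ^ N * (N.factorial : ℚ)) + X ^ (N + 1) * D^[N] (D q * q⁻¹)) * u ^ (2 * N + 1)
          = Polynomial.eval₂ ψ u (PP N) := by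
      intro N
      induction N with
      | zero =>
        rw [show PP 0 = 1 from rfl, Polynomial.eval₂_one]
        simp only [pow_zero, one_mul, Nat.factorial_zero, Nat.cast_one, map_one, pow_one,
          Function.iterate_zero, id_eq, mul_one, zero_add]
        linear_combination hF2 + hu
      | succ N ih =>
        have hDiff := congrArg D ih
        rw [D_mul, D_add, D_C, zero_add, D_mul, D_Xpow, D_pow_succ, D_eval₂ ψ hψ0 u] at hDiff
        push_cast at hDiff
        have ha : C ((-1 : ℚ) ^ (N + 1) * ((N + 1).factorial : ℚ))
            = -((((N : ℕ) : ℚ⟦X⟧) + 1) * C ((-1 : ℚ) ^ N * (N.factorial : ℚ))) := by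
          rw [show ((-1 : ℚ) ^ (N + 1) * ((N + 1).factorial : ℚ))
              = -(((N + 1 : ℕ) : ℚ) * ((-1 : ℚ) ^ N * (N.factorial : ℚ))) by
            push_cast [Nat.factorial_succ]; ring, map_neg, map_mul, map_natCast]
          push_cast
          ring
        have hφsucc : Polynomial.eval₂ ψ u (PP (N + 1)) =
            -(u ^ 2) * (u * Polynomial.eval₂ ψ u (Polynomial.derivative (PP N))
                - (((N : ℕ) : ℚ⟦X⟧)) * Polynomial.eval₂ ψ u (PP N))
            + ((s + 1) * u - s) * (u * Polynomial.eval₂ ψ u (Polynomial.derivative (PP N))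
                - (2 * ((N : ℕ) : ℚ⟦X⟧) + 1) * Polynomial.eval₂ ψ u (PP N)) := by
          rw [show PP (N + 1) =
              -Polynomial.X ^ 2 * (Polynomial.X * Polynomial.derivative (PP N)
                  - Polynomial.C (Polynomial.C (N : ℤ)) * PP N)
              + (Polynomial.C (Polynomial.X + 1) * Polynomial.X - Polynomial.C Polynomial.X) *
                  (Polynomial.X * Polynomial.derivative (PP N)
                    - Polynomial.C (Polynomial.C (2 * N + 1 : ℤ)) * PP N) from rfl]
          simp only [Polynomial.eval₂_add, Polynomial.eval₂_sub, Polynomial.eval₂_mul,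
            Polynomial.eval₂_neg, Polynomial.eval₂_pow, Polynomial.eval₂_X, Polynomial.eval₂_C,
            hψC1, hψC2, hψX, hψX1]
        rw [Function.iterate_succ_apply']
        rw [hφsucc]
        linear_combination ((X : ℚ⟦X⟧) * u ^ 2) * hDiff
          - ((((N : ℕ) : ℚ⟦X⟧) + 1) * u ^ 2 + (2 * ((N : ℕ) : ℚ⟦X⟧) + 1) * X * D u * u) * ih
          + (Polynomial.eval₂ ψ u (Polynomial.derivative (PP N)) * u
              - (2 * ((N : ℕ) : ℚ⟦X⟧) + 1) * Polynomial.eval₂ ψ u (PP N)) * hW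
          + (u ^ (2 * N + 3)) * ha
    rw [Nat.add_sub_cancel]
    rw [show 2 * (n + 1) - 1 = 2 * n + 1 by omega, main n,
      Polynomial.eval₂_eq_sum_range' ψ (lt_of_le_of_lt (PP_natDegree n) (Nat.lt_succ_self n)) u,
      ← Finset.sum_range_reflect]
    refine Finset.sum_congr rfl ?_
    intro ℓ hℓ
    simp only [Nat.add_sub_cancel]
    congr 1
    rw [hψdef, psi_apply,
      show ((m + 2 : ℕ) : ℚ) = (Int.castRingHom ℚ) ((m + 2 : ℕ) : ℤ) by simp,
      Polynomial.eval₂_at_apply]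
    rw [Polynomial.eval_mul, Polynomial.eval_C]
    congr 1
    push_cast
    rw [← mul_assoc, ← pow_add, show (n + 1 - ℓ + 1) + (n + 1 - ℓ + 1) = 2 * (n + 1 - ℓ + 1) by ring,
      pow_mul]
    norm_num
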